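/- For the Euclidean map η(x,y) = x − y in ℝⁿ, if k > (n+1)(n+2)/2, then for any points x_1,...,x_k ∈ ℝⁿ the linear system ∑_{i=1}^k f_i (x_j − x_i)(x_j − x_i)^T = C_j (j = 1,...,k), in unknowns f ∈ ℝ^k, does not have a unique solution: the associated linear map ℝ^k → (Sym_n)^k given by f ↦ (∑_i f_i (x_j − x_i)(x_j − x_i)^T)_j has nontrivial kernel. -/

import Mathlib

open Module Finset

/-- For `η(x,y) = x − y` in ℝⁿ, if `k > (n+1)(n+2)/2` then for any points
`x 1, ..., x k ∈ ℝⁿ` the linear map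
`f ↦ (∑ i, f i • (x j − x i)(x j − x i)ᵀ)_j` has nontrivial kernel, so the
system `∑ i, f i (x j − x i)(x j − x i)ᵀ = C j` never has a unique solution. -/
theorem stmt18 (n k : ℕ) (hk : k > (n + 1) * (n + 2) / 2)
    (x : Fin k → Fin n → ℝ) :
    ∃ f : Fin k → ℝ, f ≠ 0 ∧ ∀ j : Fin k,
      ∑ i, f i • (Matrix.of fun l m : Fin n =>
        (x j l - x i l) * (x j m - x i m)) = (0 : Matrix (Fin n) (Fin n) ℝ) := by
  classical
  set T := Unit ⊕ Fin n ⊕ Sym2 (Fin n) with hT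
  let M : Matrix T (Fin k) ℝ := fun t i =>
    match t with
    | .inl _ => 1
    | .inr (.inl l) => x i l
    | .inr (.inr s) => Sym2.lift ⟨fun l m => x i l * x i m,
        fun l m => mul_comm _ _⟩ s
  have hcardT : Fintype.card T = 1 + n + (n + 1).choose 2 := by
    simp [hT, Sym2.card]; omega
  have hcard : Fintype.card T < k := by
    rw [hcardT, Nat.choose_two_right, Nat.add_sub_cancel]
    obtain ⟨m, hm⟩ := Nat.even_mul_succ_self n
    have h2 : (n + 1) * (n + 2) = n * (n + 1) + 2 * (n + 1) := by ring
    have h3 : (n + 1) * n = n * (n + 1) := Nat.mul_comm _ _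
    omega
  have hlt : finrank ℝ (T → ℝ) < finrank ℝ (Fin k → ℝ) := by
    simpa using hcard
  obtain ⟨f, hfker, hf0⟩ :=
    Submodule.exists_mem_ne_zero_of_ne_bot
      (LinearMap.ker_ne_bot_of_finrank_lt (f := M.mulVecLin) hlt)
  rw [LinearMap.mem_ker] at hfker
  refine ⟨f, hf0, fun j => ?_⟩
  have key : ∀ t : T, ∑ i, M t i * f i = 0 := fun t => by
    have := congrFun hfker t
    simpa [Matrix.mulVecLin_apply, Matrix.mulVec, dotProduct] using this
  have h0 : ∑ i, f i = 0 := by simpa [M] using key (.inl ())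
  have h1 : ∀ l, ∑ i, x i l * f i = 0 := fun l => by
    simpa [M] using key (.inr (.inl l))
  have h2 : ∀ l m, ∑ i, x i l * x i m * f i = 0 := fun l m => by
    simpa [M] using key (.inr (.inr (Sym2.mk l m)))
  ext l m
  have expand : ∀ i, f i * ((x j l - x i l) * (x j m - x i m)) =
      x j l * x j m * f i - x j l * (x i m * f i) - x j m * (x i l * f i)
        + x i l * x i m * f i := fun i => by ring
  simp only [Matrix.sum_apply, Matrix.smul_apply, Matrix.of_apply, Matrix.zero_apply,
    smul_eq_mul]
  rw [Finset.sum_congr rfl fun i _ => expand i]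
  rw [Finset.sum_add_distrib, Finset.sum_sub_distrib, Finset.sum_sub_distrib,
    ← Finset.mul_sum, ← Finset.mul_sum, ← Finset.mul_sum, h0, h1, h1, h2]
  ring
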